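/- In the DLSR setup with a time-invariant true signal f_* ∈ W (so f_*^{(k)} = f_* for all k), self-adjoint T mapping W into W with A‖g‖² ≤ ⟨Tg,g⟩ ≤ ‖g‖² on W (0 < A ≤ 1), positive constants B_e, B_{e+}, B_η satisfying (β + A)·B_e = (β + ‖T‖)·B_{e+}, C = τ̄·√|S|·((β + ‖T‖)(B_e + B_{e+}) + B_η), stepsize μ < min{1/(β + A), B_η/C, β·B_{e+}/C}, and initial bounds e^{(i)} ≤ B_e, e_+^{(i)} ≤ B_{e+}, η^{(i)} ≤ B_η for all i ≤ τ̄. Then for every k ≥ τ̄: e_+^{(k+1)} ≤ (1 − μβ)·e_+^{(k)} + μ²C and e^{(k+1)} ≤ (1 − μβ − μA)·e^{(k)} + μ‖T‖·e_+^{(k)} + μ²C. -/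

import Mathlib

open scoped RealInnerProductSpace BigOperators


private noncomputable def DLSR_vec {N : ℕ} (c : Fin N → ℝ) : EuclideanSpace ℝ (Fin N) :=
  (WithLp.equiv 2 (Fin N → ℝ)).symm c

private lemma DLSR_vec_apply {N : ℕ} (c : Fin N → ℝ) (u : Fin N) : DLSR_vec c u = c u := rfl

private lemma DLSR_normsq {N : ℕ} (x : EuclideanSpace ℝ (Fin N)) : ‖x‖^2 = ∑ u, (x u)^2 := by
  rw [EuclideanSpace.norm_eq, Real.sq_sqrt (by positivity)]
  simp [sq_abs]

private lemma DLSR_sq_le {a b : ℝ} (hb : 0 ≤ b) (h : a^2 ≤ b^2) : a ≤ b := by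
  nlinarith [sq_nonneg (a - b), sq_nonneg (a + b)]

private lemma DLSR_tele (F : ℤ → ℝ) : ∀ (t : ℕ) (k : ℤ),
    F k - F (k - t) = ∑ j ∈ Finset.Icc (k - t) (k - 1), (F (j + 1) - F j) := by
  intro t
  induction t with
  | zero => intro k; simp
  | succ t ih =>
      intro k
      have hset : Finset.Icc (k - (t + 1 : ℕ)) (k - 1)
          = insert (k - (t:ℤ) - 1) (Finset.Icc (k - (t:ℕ)) (k - 1)) := by
        ext j
        simp only [Finset.mem_Icc, Finset.mem_insert]
        push_cast
        omega
      have hnm : (k - (t:ℤ) - 1) ∉ Finset.Icc (k - (t:ℕ)) (k - 1) := by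
        simp only [Finset.mem_Icc]
        omega
      rw [hset, Finset.sum_insert hnm, ← ih k]
      have h1 : k - (t:ℤ) - 1 + 1 = k - (t:ℕ) := by push_cast; ring
      rw [h1]
      have h2 : k - ((t:ℕ)+1:ℕ) = k - (t:ℤ) - 1 := by push_cast; ring
      rw [h2]
      ring

private lemma DLSR_card_Icc (k : ℤ) (t : ℕ) : (Finset.Icc (k - t) (k - 1)).card = t := by
  rw [Int.card_Icc]
  omega

private lemma DLSR_abs_norm {N : ℕ} (x : EuclideanSpace ℝ (Fin N)) :
    ‖DLSR_vec (fun u => |x u|)‖ = ‖x‖ := by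
  rw [EuclideanSpace.norm_eq, EuclideanSpace.norm_eq]
  congr 1
  apply Finset.sum_congr rfl
  intro u _
  simp [DLSR_vec_apply, Real.norm_eq_abs, sq_abs]

private lemma DLSR_key1 {N : ℕ} (S : Finset (Fin N)) (a : Fin N → Fin N → ℝ)
    (b : Fin N → ℝ) (p : Fin N → EuclideanSpace ℝ (Fin N))
    (hab : ∀ u ∈ S, ∀ v, |a u v| ≤ b u) (hp : ∀ u ∈ S, ‖p u‖ ≤ 1) :
    ‖DLSR_vec (fun v => ∑ u ∈ S, a u v * p u v)‖
      ≤ Real.sqrt (S.card) * Real.sqrt (∑ u ∈ S, (b u)^2) := by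
  have hsq : ‖DLSR_vec (fun v => ∑ u ∈ S, a u v * p u v)‖^2
      ≤ (S.card : ℝ) * (∑ u ∈ S, (b u)^2) := by
    rw [DLSR_normsq]
    have h1 : ∀ v : Fin N, (DLSR_vec (fun v => ∑ u ∈ S, a u v * p u v) v)^2
        ≤ (∑ u ∈ S, (b u)^2) * (∑ u ∈ S, (p u v)^2) := by
      intro v
      have habs : |∑ u ∈ S, a u v * p u v| ≤ ∑ u ∈ S, b u * |p u v| := by
        refine le_trans (Finset.abs_sum_le_sum_abs _ _) ?_
        apply Finset.sum_le_sum
        intro u hu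
        rw [abs_mul]
        exact mul_le_mul_of_nonneg_right (hab u hu v) (abs_nonneg _)
      have hcs : (∑ u ∈ S, b u * |p u v|)^2 ≤ (∑ u ∈ S, (b u)^2) * (∑ u ∈ S, (|p u v|)^2) :=
        Finset.sum_mul_sq_le_sq_mul_sq S b (fun u => |p u v|)
      calc (DLSR_vec (fun v => ∑ u ∈ S, a u v * p u v) v)^2
          = |∑ u ∈ S, a u v * p u v|^2 := by rw [DLSR_vec_apply, sq_abs]
        _ ≤ (∑ u ∈ S, b u * |p u v|)^2 := by
            apply pow_le_pow_left₀ (abs_nonneg _) habs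
        _ ≤ (∑ u ∈ S, (b u)^2) * (∑ u ∈ S, (p u v)^2) := by
            simpa [sq_abs] using hcs
    calc (∑ v, (DLSR_vec (fun v => ∑ u ∈ S, a u v * p u v) v)^2)
        ≤ ∑ v : Fin N, (∑ u ∈ S, (b u)^2) * (∑ u ∈ S, (p u v)^2) :=
          Finset.sum_le_sum (fun v _ => h1 v)
      _ = (∑ u ∈ S, (b u)^2) * (∑ u ∈ S, ∑ v : Fin N, (p u v)^2) := by
          rw [← Finset.mul_sum, Finset.sum_comm]
      _ = (∑ u ∈ S, (b u)^2) * (∑ u ∈ S, ‖p u‖^2) := by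
          congr 1
          exact Finset.sum_congr rfl (fun u _ => (DLSR_normsq (p u)).symm)
      _ ≤ (∑ u ∈ S, (b u)^2) * (∑ u ∈ S, (1:ℝ)) := by
          apply mul_le_mul_of_nonneg_left _ (Finset.sum_nonneg (fun u _ => sq_nonneg _))
          apply Finset.sum_le_sum
          intro u hu
          have := hp u hu
          nlinarith [norm_nonneg (p u)]
      _ = (S.card : ℝ) * (∑ u ∈ S, (b u)^2) := by
          simp [mul_comm]
  apply DLSR_sq_le (by positivity)
  calc ‖DLSR_vec (fun v => ∑ u ∈ S, a u v * p u v)‖^2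
      ≤ (S.card : ℝ) * (∑ u ∈ S, (b u)^2) := hsq
    _ = (Real.sqrt (S.card) * Real.sqrt (∑ u ∈ S, (b u)^2))^2 := by
        rw [mul_pow, Real.sq_sqrt (by positivity), Real.sq_sqrt]
        exact Finset.sum_nonneg (fun u _ => sq_nonneg _)

private lemma DLSR_sq_le' {a b : ℝ} (hb : 0 ≤ b) (h : a^2 ≤ b^2) : a ≤ b := by
  nlinarith [sq_nonneg (a - b), sq_nonneg (a + b)]

set_option maxHeartbeats 1000000 in
private lemma DLSR_spectral {N : ℕ} (W : Submodule ℝ (EuclideanSpace ℝ (Fin N)))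
    (T : EuclideanSpace ℝ (Fin N) →L[ℝ] EuclideanSpace ℝ (Fin N))
    (A L c μ : ℝ)
    (hTW : ∀ x, T x ∈ W)
    (hsymm : ∀ x ∈ W, ∀ y ∈ W, ⟪T x, y⟫ = ⟪x, T y⟫)
    (hlow : ∀ x ∈ W, A * ‖x‖^2 ≤ ⟪T x, x⟫)
    (hhigh : ∀ x ∈ W, ⟪T x, x⟫ ≤ L * ‖x‖^2)
    (hAL : A ≤ L) (hμ : 0 ≤ μ) (h2 : μ * (L + A) ≤ 2 * c) (hcA : 0 ≤ c - μ * A)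
    (h : EuclideanSpace ℝ (Fin N)) (hh : h ∈ W) :
    ‖c • h - μ • T h‖ ≤ (c - μ * A) * ‖h‖ := by
  set s : EuclideanSpace ℝ (Fin N) := T h - A • h with hs
  have hsW : s ∈ W := W.sub_mem (hTW h) (W.smul_mem A hh)
  set t : ℝ := ⟪T h, h⟫ with ht
  -- B x y := ⟪T x, y⟫ - A * ⟪x, y⟫
  have hBpos : ∀ x ∈ W, 0 ≤ ⟪T x, x⟫ - A * ⟪x, x⟫ := by
    intro x hx
    have := hlow x hx
    rw [real_inner_self_eq_norm_sq]
    linarith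
  -- quadratic in r
  have hquad : ∀ r : ℝ, 0 ≤ (⟪T s, s⟫ - A * ⟪s, s⟫) * (r * r)
      + (2 * (⟪T h, s⟫ - A * ⟪h, s⟫)) * r + (⟪T h, h⟫ - A * ⟪h, h⟫) := by
    intro r
    have hmem : h + r • s ∈ W := W.add_mem hh (W.smul_mem r hsW)
    have h0 := hBpos _ hmem
    have hc : ⟪T s, h⟫ = ⟪T h, s⟫ :=
      (hsymm s hsW h hh).trans (real_inner_comm (T h) s)
    have expand : ⟪T (h + r • s), h + r • s⟫ - A * ⟪h + r • s, h + r • s⟫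
        = (⟪T s, s⟫ - A * ⟪s, s⟫) * (r * r)
          + (2 * (⟪T h, s⟫ - A * ⟪h, s⟫)) * r + (⟪T h, h⟫ - A * ⟪h, h⟫) := by
      rw [map_add, map_smul]
      simp only [inner_add_add_self, real_inner_smul_left, real_inner_smul_right,
        inner_add_left, inner_add_right]
      rw [hc, real_inner_comm h s]
      ring
    rw [expand] at h0
    exact h0
  have hdisc := discrim_le_zero hquad
  rw [discrim] at hdisc
  have hBhs : ⟪T h, s⟫ - A * ⟪h, s⟫ = ‖s‖^2 := by
    have : ⟪T h, s⟫ - A * ⟪h, s⟫ = ⟪T h - A • h, s⟫ := by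
      rw [inner_sub_left, real_inner_smul_left]
    rw [this, ← hs, real_inner_self_eq_norm_sq]
  have hBhh : ⟪T h, h⟫ - A * ⟪h, h⟫ = t - A * ‖h‖^2 := by
    rw [real_inner_self_eq_norm_sq, ht]
  have hBss : ⟪T s, s⟫ - A * ⟪s, s⟫ ≤ (L - A) * ‖s‖^2 := by
    have := hhigh s hsW
    rw [real_inner_self_eq_norm_sq]
    linarith
  have hBss0 : 0 ≤ ⟪T s, s⟫ - A * ⟪s, s⟫ := hBpos s hsW
  have hth : 0 ≤ t - A * ‖h‖^2 := by
    have := hlow h hh; linarith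
  -- ‖s‖^4 ≤ (L - A) * (t - A‖h‖²) * ‖s‖²  then ‖s‖² ≤ (L-A)(t - A‖h‖²)
  have hs2 : ‖s‖^2 ≤ (L - A) * (t - A * ‖h‖^2) := by
    rcases eq_or_lt_of_le (norm_nonneg s) with h0 | h0
    · have hz : ‖s‖^2 = 0 := by rw [← h0]; ring
      rw [hz]
      exact mul_nonneg (by linarith) hth
    · have h4 : ‖s‖^2 * ‖s‖^2 ≤ ((t - A * ‖h‖^2) * ((L - A) * ‖s‖^2)) := by
        calc ‖s‖^2 * ‖s‖^2 = (⟪T h, s⟫ - A * ⟪h, s⟫) * (⟪T h, s⟫ - A * ⟪h, s⟫) := by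
              rw [hBhs]
          _ ≤ (t - A * ‖h‖^2) * (⟪T s, s⟫ - A * ⟪s, s⟫) := by nlinarith [hdisc, hBhh]
          _ ≤ (t - A * ‖h‖^2) * ((L - A) * ‖s‖^2) := by
              exact mul_le_mul_of_nonneg_left (by nlinarith [hBss]) hth
      have hpos : 0 < ‖s‖^2 := by positivity
      nlinarith [h4]
  -- ‖T h‖² ≤ (L + A)(t - A‖h‖²) + A²‖h‖²
  have hTh : T h = s + A • h := by rw [hs]; abel
  have hsh : ⟪s, h⟫ = t - A * ‖h‖^2 := by
    rw [hs, inner_sub_left, real_inner_smul_left, real_inner_self_eq_norm_sq, ht]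
  have hThn : ‖T h‖^2 ≤ (L + A) * (t - A * ‖h‖^2) + A^2 * ‖h‖^2 := by
    have hA2 : ‖A • h‖^2 = A^2 * ‖h‖^2 := by
      rw [norm_smul]; simp [mul_pow, sq_abs, Real.norm_eq_abs]
    rw [hTh, norm_add_sq_real, real_inner_smul_right, hsh, hA2]
    linarith [hs2]
  -- final
  clear_value s t
  have hfin : ‖c • h - μ • T h‖^2 ≤ ((c - μ * A) * ‖h‖)^2 := by
    have hiht : ⟪h, T h⟫ = t := (real_inner_comm (T h) h).trans ht.symm
    rw [norm_sub_sq_real, real_inner_smul_left, real_inner_smul_right, hiht]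
    have h1 : ‖c • h‖^2 = c^2 * ‖h‖^2 := by rw [norm_smul]; simp [mul_pow, sq_abs]
    have h2' : ‖μ • T h‖^2 = μ^2 * ‖T h‖^2 := by rw [norm_smul]; simp [mul_pow, sq_abs]
    rw [h1, h2']
    have k1 : μ^2 * ‖T h‖^2 ≤ μ^2 * ((L + A) * (t - A * ‖h‖^2) + A^2 * ‖h‖^2) :=
      mul_le_mul_of_nonneg_left hThn (sq_nonneg μ)
    have k2 : 0 ≤ μ * (t - A * ‖h‖^2) * (2 * c - μ * (L + A)) :=
      mul_nonneg (mul_nonneg hμ hth) (by linarith)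
    nlinarith [k1, k2]
  exact DLSR_sq_le' (by positivity) hfin

set_option maxHeartbeats 4000000


/-- Corollary 1: DLSR with a time-invariant true signal `f_* ∈ W`:
for `μ < min{1/(β+A), B_η/C, βB_{e+}/C}` and bounded initial errors, the recursions
`e_+^{(k+1)} ≤ (1−μβ)e_+^{(k)} + μ²C` and
`e^{(k+1)} ≤ (1−μβ−μA)e^{(k)} + μ‖T‖e_+^{(k)} + μ²C` hold for `k ≥ τ̄`. -/
theorem DLSR_time_invariant_error_recursions
    {N : ℕ} (W : Submodule ℝ (EuclideanSpace ℝ (Fin N)))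
    (S : Finset (Fin N)) (τ : Fin N → Fin N → ℕ) (τbar : ℕ)
    (hτ : ∀ u ∈ S, ∀ v : Fin N, 1 ≤ τ u v ∧ τ u v ≤ τbar)
    (T : EuclideanSpace ℝ (Fin N) →L[ℝ] EuclideanSpace ℝ (Fin N))
    (hT : ∀ g : EuclideanSpace ℝ (Fin N), T g =
      ∑ u ∈ S, g u • (W.orthogonalProjectionOnto (EuclideanSpace.single u (1 : ℝ)) :
        EuclideanSpace ℝ (Fin N)))
    (hTW : ∀ g ∈ W, T g ∈ W)
    (hTsa : ∀ g ∈ W, ∀ h ∈ W, ⟪T g, h⟫ = ⟪g, T h⟫)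
    (A : ℝ) (hA : 0 < A) (hA1 : A ≤ 1)
    (hTbnd : ∀ g ∈ W, A * ‖g‖ ^ 2 ≤ ⟪T g, g⟫ ∧ ⟪T g, g⟫ ≤ ‖g‖ ^ 2)
    (μ β : ℝ) (hμ : 0 < μ) (hβ : 0 < β)
    (fstar : EuclideanSpace ℝ (Fin N)) (hfstarW : fstar ∈ W)
    (f : ℤ → EuclideanSpace ℝ (Fin N))
    (hiter : ∀ (k : ℤ) (v : Fin N), f (k + 1) v =
      (1 - μ * β) * f k v +
      μ * ∑ u ∈ S, (fstar u - f (k - τ u v) u) *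
        (W.orthogonalProjectionOnto (EuclideanSpace.single u (1 : ℝ)) :
          EuclideanSpace ℝ (Fin N)) v)
    (ftil : EuclideanSpace ℝ (Fin N))
    (hftilW : ftil ∈ W) (hftil : β • ftil + T ftil = T fstar)
    (e ep η : ℤ → ℝ)
    (he : ∀ k : ℤ, e k =
      ‖(W.orthogonalProjectionOnto (f k - ftil) : EuclideanSpace ℝ (Fin N))‖)
    (hep : ∀ k : ℤ, ep k =
      ‖f k - (W.orthogonalProjectionOnto (f k) : EuclideanSpace ℝ (Fin N))‖)
    (hη : ∀ k : ℤ, η k = ‖∑ u ∈ S, ∑ v : Fin N, EuclideanSpace.single v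
      ((f k u - f (k - τ u v) u) *
        (W.orthogonalProjectionOnto (EuclideanSpace.single u (1 : ℝ)) :
          EuclideanSpace ℝ (Fin N)) v)‖)
    (Be Bep Bη C : ℝ) (hBe : 0 < Be) (hBep : 0 < Bep) (hBη : 0 < Bη)
    (hrel : (β + A) * Be = (β + ‖T‖) * Bep)
    (hC : C = τbar * Real.sqrt (S.card : ℝ) * ((β + ‖T‖) * (Be + Bep) + Bη))
    (hμlt : μ < min (1 / (β + A)) (min (Bη / C) (β * Bep / C)))
    (hinit : ∀ i : ℤ, i ≤ (τbar : ℤ) → e i ≤ Be ∧ ep i ≤ Bep ∧ η i ≤ Bη) :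
    ∀ k : ℤ, (τbar : ℤ) ≤ k →
      ep (k + 1) ≤ (1 - μ * β) * ep k + μ ^ 2 * C ∧
      e (k + 1) ≤ (1 - μ * β - μ * A) * e k + μ * ‖T‖ * ep k + μ ^ 2 * C := by
    classical
  -- ======================= scalar facts =======================
  have hβA : (0:ℝ) < β + A := by linarith
  obtain ⟨hμa, hμbc⟩ := lt_min_iff.mp hμlt
  obtain ⟨hμb, hμc⟩ := lt_min_iff.mp hμbc
  have hμ1 : μ * (β + A) < 1 := by
    rw [lt_div_iff₀ hβA] at hμa; linarith
  have hC0 : 0 < C := by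
    have h0 : 0 < Bη / C := lt_trans hμ hμb
    rcases div_pos_iff.mp h0 with ⟨_, h⟩ | ⟨h, _⟩
    · exact h
    · linarith
  have hμC1 : μ * C < Bη := (lt_div_iff₀ hC0).mp hμb
  have hμC2 : μ * C < β * Bep := (lt_div_iff₀ hC0).mp hμc
  have hc0 : 0 ≤ 1 - μ * β := by nlinarith
  have hcA0 : 0 ≤ 1 - μ * β - μ * A := by nlinarith
  have hT0 : (0:ℝ) ≤ ‖T‖ := norm_nonneg _
  have hsqc0 : (0:ℝ) ≤ Real.sqrt (S.card : ℝ) := Real.sqrt_nonneg _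
  have hK0pos : (0:ℝ) < (β + ‖T‖) * (Be + Bep) + Bη := by nlinarith
  have hτcard : 0 < (τbar:ℝ) * Real.sqrt (S.card : ℝ) := by
    rcases lt_or_ge 0 ((τbar:ℝ) * Real.sqrt (S.card : ℝ)) with h | h
    · exact h
    · exfalso
      have : C ≤ 0 := by rw [hC]; nlinarith
      linarith
  have hτpos : 0 < τbar := by
    rcases Nat.eq_zero_or_pos τbar with h | h
    · exfalso; rw [h] at hτcard; norm_num at hτcard
    · exact h
  -- ======================= projection facts =======================
  have hprself : ∀ x : EuclideanSpace ℝ (Fin N), x ∈ W →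
      (W.orthogonalProjectionOnto x : EuclideanSpace ℝ (Fin N)) = x :=
    fun x hx => W.starProjection_eq_self_iff.mpr hx
  have hpyth : ∀ x : EuclideanSpace ℝ (Fin N),
      ‖(W.orthogonalProjectionOnto x : EuclideanSpace ℝ (Fin N))‖^2
        + ‖x - (W.orthogonalProjectionOnto x : EuclideanSpace ℝ (Fin N))‖^2 = ‖x‖^2 := by
    intro x
    have hz : ⟪x - (W.orthogonalProjectionOnto x : EuclideanSpace ℝ (Fin N)),
        (W.orthogonalProjectionOnto x : EuclideanSpace ℝ (Fin N))⟫ = 0 :=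
      W.starProjection_inner_eq_zero x _ (SetLike.coe_mem _)
    have hx : x = (W.orthogonalProjectionOnto x : EuclideanSpace ℝ (Fin N))
        + (x - (W.orthogonalProjectionOnto x : EuclideanSpace ℝ (Fin N))) := by abel
    calc ‖(W.orthogonalProjectionOnto x : EuclideanSpace ℝ (Fin N))‖^2
          + ‖x - (W.orthogonalProjectionOnto x : EuclideanSpace ℝ (Fin N))‖^2
        = ‖(W.orthogonalProjectionOnto x : EuclideanSpace ℝ (Fin N))
            + (x - (W.orthogonalProjectionOnto x : EuclideanSpace ℝ (Fin N)))‖^2 := by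
          rw [norm_add_sq_real]
          have : ⟪(W.orthogonalProjectionOnto x : EuclideanSpace ℝ (Fin N)),
              x - (W.orthogonalProjectionOnto x : EuclideanSpace ℝ (Fin N))⟫ = 0 := by
            rw [real_inner_comm]; exact hz
          rw [this]; ring
      _ = ‖x‖^2 := by rw [← hx]
  have hprle : ∀ x : EuclideanSpace ℝ (Fin N),
      ‖(W.orthogonalProjectionOnto x : EuclideanSpace ℝ (Fin N))‖ ≤ ‖x‖ := by
    intro x
    apply DLSR_sq_le (norm_nonneg _)
    nlinarith [hpyth x, sq_nonneg ‖x - (W.orthogonalProjectionOnto x : EuclideanSpace ℝ (Fin N))‖]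
  have hqle : ∀ x : EuclideanSpace ℝ (Fin N),
      ‖x - (W.orthogonalProjectionOnto x : EuclideanSpace ℝ (Fin N))‖ ≤ ‖x‖ := by
    intro x
    apply DLSR_sq_le (norm_nonneg _)
    nlinarith [hpyth x, sq_nonneg ‖(W.orthogonalProjectionOnto x : EuclideanSpace ℝ (Fin N))‖]
  -- abbreviations
  set pδ : Fin N → EuclideanSpace ℝ (Fin N) :=
    fun u => (W.orthogonalProjectionOnto (EuclideanSpace.single u (1 : ℝ)) :
      EuclideanSpace ℝ (Fin N)) with hpδdef
  set Dlt : ℤ → EuclideanSpace ℝ (Fin N) := fun k => f k - ftil with hDltdef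
  set gv : ℤ → EuclideanSpace ℝ (Fin N) :=
    fun k => DLSR_vec (fun v => ∑ u ∈ S, (f k u - f (k - τ u v) u) * pδ u v) with hgvdef
  set EE : ℤ → EuclideanSpace ℝ (Fin N) :=
    fun k => DLSR_vec (fun v => ∑ u ∈ S, Dlt (k - τ u v) u * pδ u v) with hEEdef
  have hpδ1 : ∀ u ∈ S, ‖pδ u‖ ≤ 1 := by
    intro u _
    calc ‖pδ u‖ ≤ ‖EuclideanSpace.single u (1:ℝ)‖ := hprle _
      _ = 1 := by rw [EuclideanSpace.norm_single]; norm_num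
  have hTmem : ∀ x : EuclideanSpace ℝ (Fin N), T x ∈ W := by
    intro x
    rw [hT x]
    exact Submodule.sum_mem _ (fun u _ => Submodule.smul_mem _ _ (SetLike.coe_mem _))
  have hTco : ∀ (x : EuclideanSpace ℝ (Fin N)) (v : Fin N),
      T x v = ∑ u ∈ S, x u * pδ u v := by
    intro x v
    rw [hT x, WithLp.ofLp_sum, Finset.sum_apply]
    exact Finset.sum_congr rfl (fun u _ => rfl)
  have he' : ∀ j : ℤ, e j = ‖(W.orthogonalProjectionOnto (Dlt j) : EuclideanSpace ℝ (Fin N))‖ := he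
  have hPD : ∀ j : ℤ, (W.orthogonalProjectionOnto (Dlt j) : EuclideanSpace ℝ (Fin N))
      = (W.orthogonalProjectionOnto (f j) : EuclideanSpace ℝ (Fin N)) - ftil := by
    intro j
    have h0 : Dlt j = f j - ftil := rfl
    rw [h0, map_sub]
    push_cast
    rw [hprself ftil hftilW]
  have hep' : ∀ j : ℤ, ep j = ‖Dlt j - (W.orthogonalProjectionOnto (Dlt j) : EuclideanSpace ℝ (Fin N))‖ := by
    intro j
    rw [hep j, hPD j]
    congr 1
    show f j - _ = (f j - ftil) - _
    abel
  have hDle : ∀ j : ℤ, ‖Dlt j‖ ≤ e j + ep j := by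
    intro j
    calc ‖Dlt j‖ = ‖(W.orthogonalProjectionOnto (Dlt j) : EuclideanSpace ℝ (Fin N))
          + (Dlt j - (W.orthogonalProjectionOnto (Dlt j) : EuclideanSpace ℝ (Fin N)))‖ := by
          congr 1; abel
      _ ≤ ‖(W.orthogonalProjectionOnto (Dlt j) : EuclideanSpace ℝ (Fin N))‖
          + ‖Dlt j - (W.orthogonalProjectionOnto (Dlt j) : EuclideanSpace ℝ (Fin N))‖ := norm_add_le _ _
      _ = e j + ep j := by rw [he' j, hep' j]
  have hiter' : ∀ (k : ℤ) (v : Fin N), f (k + 1) v =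
      (1 - μ * β) * f k v + μ * ∑ u ∈ S, (fstar u - f (k - τ u v) u) * pδ u v := hiter
  have hη0 : ∀ k : ℤ, η k = ‖∑ u ∈ S, ∑ v : Fin N, EuclideanSpace.single v
      ((f k u - f (k - τ u v) u) * pδ u v)‖ := hη
  have hη'' : ∀ k : ℤ, η k = ‖gv k‖ := by
    intro k
    rw [hη0 k]
    congr 1
    ext w
    rw [WithLp.ofLp_sum, Finset.sum_apply]
    have hterm : ∀ u ∈ S,
        (∑ v : Fin N, EuclideanSpace.single v ((f k u - f (k - τ u v) u) * pδ u v)) w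
          = (f k u - f (k - τ u w) u) * pδ u w := by
      intro u _
      rw [WithLp.ofLp_sum, Finset.sum_apply]
      simp [EuclideanSpace.single_apply]
    rw [Finset.sum_congr rfl hterm]
    rfl
  have hVR1 : ∀ k : ℤ, Dlt (k + 1) = (1 - μ * β) • Dlt k - μ • EE k := by
    intro k
    ext v
    show f (k + 1) v - ftil v
        = (1 - μ * β) * (f k v - ftil v)
          - μ * (∑ u ∈ S, (f (k - τ u v) u - ftil u) * pδ u v)
    have h0 : β * ftil v + T ftil v = T fstar v := congrArg (fun x => x v) hftil
    rw [hTco ftil v, hTco fstar v] at h0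
    have hftilco : ∑ u ∈ S, (fstar u - ftil u) * pδ u v = β * ftil v := by
      have hs : ∑ u ∈ S, (fstar u - ftil u) * pδ u v
          = (∑ u ∈ S, fstar u * pδ u v) - ∑ u ∈ S, ftil u * pδ u v := by
        rw [← Finset.sum_sub_distrib]
        exact Finset.sum_congr rfl (fun u _ => by ring)
      rw [hs]; linarith
    rw [hiter' k v]
    have hsplit : ∑ u ∈ S, (fstar u - f (k - τ u v) u) * pδ u v
        = (∑ u ∈ S, (fstar u - ftil u) * pδ u v)
          - ∑ u ∈ S, ((f (k - τ u v) u - ftil u) * pδ u v) := by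
      rw [← Finset.sum_sub_distrib]
      exact Finset.sum_congr rfl (fun u _ => by ring)
    rw [hsplit, hftilco]
    ring
  have hgT : ∀ k : ℤ, EE k = T (Dlt k) - gv k := by
    intro k
    ext v
    show (∑ u ∈ S, (f (k - τ u v) u - ftil u) * pδ u v)
        = T (Dlt k) v - ∑ u ∈ S, (f k u - f (k - τ u v) u) * pδ u v
    rw [hTco (Dlt k) v]
    rw [← Finset.sum_sub_distrib]
    refine Finset.sum_congr rfl (fun u _ => ?_)
    show (f (k - τ u v) u - ftil u) * pδ u v
        = (f k u - ftil u) * pδ u v - (f k u - f (k - τ u v) u) * pδ u v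
    ring
  have hVR2 : ∀ k : ℤ, Dlt (k + 1) = (1 - μ * β) • Dlt k - μ • T (Dlt k) + μ • gv k := by
    intro k
    rw [hVR1 k, hgT k]
    module
  have hQlin : ∀ k : ℤ,
      Dlt (k + 1) - (W.orthogonalProjectionOnto (Dlt (k + 1)) : EuclideanSpace ℝ (Fin N))
        = (1 - μ * β) • (Dlt k - (W.orthogonalProjectionOnto (Dlt k) : EuclideanSpace ℝ (Fin N)))
          + μ • (gv k - (W.orthogonalProjectionOnto (gv k) : EuclideanSpace ℝ (Fin N))) := by
    intro k
    have hPTD : (W.orthogonalProjectionOnto (T (Dlt k)) : EuclideanSpace ℝ (Fin N)) = T (Dlt k) :=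
      hprself _ (hTmem _)
    have hP : (W.orthogonalProjectionOnto (Dlt (k + 1)) : EuclideanSpace ℝ (Fin N))
        = (1 - μ * β) • (W.orthogonalProjectionOnto (Dlt k) : EuclideanSpace ℝ (Fin N))
          - μ • T (Dlt k)
          + μ • (W.orthogonalProjectionOnto (gv k) : EuclideanSpace ℝ (Fin N)) := by
      rw [hVR2 k, map_add, map_sub, map_smul, map_smul, map_smul]
      push_cast
      rw [hPTD]
    rw [hP, hVR2 k]
    module
  have hLep : ∀ k : ℤ, ep (k + 1) ≤ (1 - μ * β) * ep k + μ * η k := by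
    intro k
    rw [hep' (k + 1), hQlin k]
    calc ‖(1 - μ * β) • (Dlt k - (W.orthogonalProjectionOnto (Dlt k) : EuclideanSpace ℝ (Fin N)))
          + μ • (gv k - (W.orthogonalProjectionOnto (gv k) : EuclideanSpace ℝ (Fin N)))‖
        ≤ ‖(1 - μ * β) • (Dlt k - (W.orthogonalProjectionOnto (Dlt k) : EuclideanSpace ℝ (Fin N)))‖
          + ‖μ • (gv k - (W.orthogonalProjectionOnto (gv k) : EuclideanSpace ℝ (Fin N)))‖ :=
          norm_add_le _ _
      _ = (1 - μ * β) * ‖Dlt k - (W.orthogonalProjectionOnto (Dlt k) : EuclideanSpace ℝ (Fin N))‖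
          + μ * ‖gv k - (W.orthogonalProjectionOnto (gv k) : EuclideanSpace ℝ (Fin N))‖ := by
          rw [norm_smul, norm_smul, Real.norm_eq_abs, Real.norm_eq_abs,
            abs_of_nonneg hc0, abs_of_nonneg hμ.le]
      _ ≤ (1 - μ * β) * ep k + μ * η k := by
          have h1 : ‖Dlt k - (W.orthogonalProjectionOnto (Dlt k) : EuclideanSpace ℝ (Fin N))‖ = ep k :=
            (hep' k).symm
          have h2 : ‖gv k - (W.orthogonalProjectionOnto (gv k) : EuclideanSpace ℝ (Fin N))‖ ≤ η k := by
            rw [hη'' k]; exact hqle _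
          rw [h1]
          exact add_le_add le_rfl (mul_le_mul_of_nonneg_left h2 hμ.le)
  have hstep : ∀ j : ℤ, e j ≤ Be → ep j ≤ Bep → η j ≤ Bη →
      ‖Dlt (j + 1) - Dlt j‖ ≤ μ * ((β + ‖T‖) * (Be + Bep) + Bη) := by
    intro j h1 h2 h3
    have hid : Dlt (j + 1) - Dlt j = (-(μ * β)) • Dlt j - μ • T (Dlt j) + μ • gv j := by
      rw [hVR2 j]
      module
    rw [hid]
    have hTop : ‖T (Dlt j)‖ ≤ ‖T‖ * ‖Dlt j‖ := T.le_opNorm _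
    have hgvj : ‖gv j‖ ≤ Bη := by rw [← hη'' j]; exact h3
    have hDj : ‖Dlt j‖ ≤ Be + Bep := le_trans (hDle j) (by linarith)
    have hD0 : 0 ≤ ‖Dlt j‖ := norm_nonneg _
    calc ‖(-(μ * β)) • Dlt j - μ • T (Dlt j) + μ • gv j‖
        ≤ ‖(-(μ * β)) • Dlt j - μ • T (Dlt j)‖ + ‖μ • gv j‖ := norm_add_le _ _
      _ ≤ ‖(-(μ * β)) • Dlt j‖ + ‖μ • T (Dlt j)‖ + ‖μ • gv j‖ := by
          linarith [norm_sub_le ((-(μ * β)) • Dlt j) (μ • T (Dlt j))]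
      _ = μ * β * ‖Dlt j‖ + μ * ‖T (Dlt j)‖ + μ * ‖gv j‖ := by
          simp only [norm_smul, Real.norm_eq_abs, abs_neg,
            abs_of_nonneg (mul_nonneg hμ.le hβ.le), abs_of_nonneg hμ.le]
      _ ≤ μ * ((β + ‖T‖) * (Be + Bep) + Bη) := by
          have k1 : μ * ‖T (Dlt j)‖ ≤ μ * (‖T‖ * (Be + Bep)) := by
            apply mul_le_mul_of_nonneg_left _ hμ.le
            calc ‖T (Dlt j)‖ ≤ ‖T‖ * ‖Dlt j‖ := hTop
              _ ≤ ‖T‖ * (Be + Bep) := mul_le_mul_of_nonneg_left hDj hT0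
          have k2 : μ * β * ‖Dlt j‖ ≤ μ * β * (Be + Bep) :=
            mul_le_mul_of_nonneg_left hDj (mul_nonneg hμ.le hβ.le)
          have k3 : μ * ‖gv j‖ ≤ μ * Bη := mul_le_mul_of_nonneg_left hgvj hμ.le
          nlinarith [k1, k2, k3]
  have hetaC : ∀ k : ℤ,
      (∀ j : ℤ, k - τbar ≤ j → j ≤ k - 1 → e j ≤ Be ∧ ep j ≤ Bep ∧ η j ≤ Bη) →
      η k ≤ μ * C := by
    intro k hw
    set b : Fin N → ℝ :=
      fun u => ∑ j ∈ Finset.Icc (k - τbar) (k - 1), |(Dlt (j + 1) - Dlt j) u| with hbdef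
    have hab : ∀ u ∈ S, ∀ v, |f k u - f (k - τ u v) u| ≤ b u := by
      intro u hu v
      obtain ⟨h1τ, h2τ⟩ := hτ u hu v
      have htel : f k u - f (k - (τ u v : ℤ)) u
          = ∑ j ∈ Finset.Icc (k - (τ u v : ℤ)) (k - 1), (f (j + 1) u - f j u) :=
        DLSR_tele (fun j => f j u) (τ u v) k
      rw [htel]
      refine le_trans (Finset.abs_sum_le_sum_abs _ _) ?_
      have hsub : Finset.Icc (k - (τ u v : ℤ)) (k - 1) ⊆ Finset.Icc (k - (τbar : ℤ)) (k - 1) := by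
        apply Finset.Icc_subset_Icc _ le_rfl
        omega
      have heq : ∀ j ∈ Finset.Icc (k - (τ u v : ℤ)) (k - 1),
          |f (j + 1) u - f j u| = |(Dlt (j + 1) - Dlt j) u| := by
        intro j _
        have : (Dlt (j + 1) - Dlt j) u = f (j + 1) u - f j u := by
          show (f (j + 1) u - ftil u) - (f j u - ftil u) = _
          ring
        rw [this]
      rw [Finset.sum_congr rfl heq]
      exact Finset.sum_le_sum_of_subset_of_nonneg hsub (fun j _ _ => abs_nonneg _)
    have hkey : ‖gv k‖ ≤ Real.sqrt (S.card) * Real.sqrt (∑ u ∈ S, (b u)^2) :=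
      DLSR_key1 S (fun u v => f k u - f (k - τ u v) u) b pδ hab hpδ1
    have hbvec : DLSR_vec b
        = ∑ j ∈ Finset.Icc (k - τbar) (k - 1), DLSR_vec (fun u => |(Dlt (j + 1) - Dlt j) u|) := by
      ext u
      rw [WithLp.ofLp_sum, Finset.sum_apply]
      rfl
    have hbnorm : Real.sqrt (∑ u ∈ S, (b u)^2)
        ≤ ∑ j ∈ Finset.Icc (k - τbar) (k - 1), ‖Dlt (j + 1) - Dlt j‖ := by
      have h1 : (∑ u ∈ S, (b u)^2) ≤ ‖DLSR_vec b‖^2 := by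
        rw [DLSR_normsq]
        exact Finset.sum_le_sum_of_subset_of_nonneg (Finset.subset_univ S)
          (fun u _ _ => sq_nonneg _)
      have h2 : ‖DLSR_vec b‖ ≤ ∑ j ∈ Finset.Icc (k - τbar) (k - 1), ‖Dlt (j + 1) - Dlt j‖ := by
        rw [hbvec]
        refine le_trans (norm_sum_le _ _) ?_
        refine Finset.sum_le_sum (fun j _ => ?_)
        rw [DLSR_abs_norm]
      calc Real.sqrt (∑ u ∈ S, (b u)^2) ≤ Real.sqrt (‖DLSR_vec b‖^2) := Real.sqrt_le_sqrt h1
        _ = ‖DLSR_vec b‖ := by rw [Real.sqrt_sq (norm_nonneg _)]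
        _ ≤ _ := h2
    have hsteps : ∑ j ∈ Finset.Icc (k - τbar) (k - 1), ‖Dlt (j + 1) - Dlt j‖
        ≤ τbar * (μ * ((β + ‖T‖) * (Be + Bep) + Bη)) := by
      calc ∑ j ∈ Finset.Icc (k - τbar) (k - 1), ‖Dlt (j + 1) - Dlt j‖
          ≤ ∑ _j ∈ Finset.Icc (k - τbar) (k - 1), (μ * ((β + ‖T‖) * (Be + Bep) + Bη)) := by
            refine Finset.sum_le_sum (fun j hj => ?_)
            rw [Finset.mem_Icc] at hj
            obtain ⟨hj1, hj2⟩ := hj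
            obtain ⟨q1, q2, q3⟩ := hw j hj1 hj2
            exact hstep j q1 q2 q3
        _ = τbar * (μ * ((β + ‖T‖) * (Be + Bep) + Bη)) := by
            rw [Finset.sum_const, DLSR_card_Icc, nsmul_eq_mul]
    rw [hη'' k]
    calc ‖gv k‖ ≤ Real.sqrt (S.card) * Real.sqrt (∑ u ∈ S, (b u)^2) := hkey
      _ ≤ Real.sqrt (S.card) * (τbar * (μ * ((β + ‖T‖) * (Be + Bep) + Bη))) :=
          mul_le_mul_of_nonneg_left (le_trans hbnorm hsteps) hsqc0
      _ = μ * C := by rw [hC]; ring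
  by_cases hcase : μ * (β + ‖T‖) ≤ 1
  · -- =================== CASE I ===================
    have hspec : ∀ x : EuclideanSpace ℝ (Fin N), x ∈ W →
        ‖(1 - μ * β) • x - μ • T x‖ ≤ (1 - μ * β - μ * A) * ‖x‖ := by
      intro x hx
      by_cases hx0 : x = 0
      · subst hx0; simp
      · have hxn : 0 < ‖x‖ := norm_pos_iff.mpr hx0
        have hAT : A ≤ ‖T‖ := by
          have h1 := (hTbnd x hx).1
          have h2 : ⟪T x, x⟫ ≤ ‖T‖ * ‖x‖ ^ 2 := by
            calc ⟪T x, x⟫ ≤ ‖T x‖ * ‖x‖ := real_inner_le_norm _ _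
              _ ≤ (‖T‖ * ‖x‖) * ‖x‖ := mul_le_mul_of_nonneg_right (T.le_opNorm x) (norm_nonneg x)
              _ = ‖T‖ * ‖x‖ ^ 2 := by ring
          nlinarith [h1, h2, mul_pos hxn hxn]
        have hhigh : ∀ y, y ∈ W → ⟪T y, y⟫ ≤ (min 1 ‖T‖) * ‖y‖ ^ 2 := by
          intro y hy
          rcases le_total (1 : ℝ) ‖T‖ with h | h
          · rw [min_eq_left h]
            linarith [(hTbnd y hy).2]
          · rw [min_eq_right h]
            calc ⟪T y, y⟫ ≤ ‖T y‖ * ‖y‖ := real_inner_le_norm _ _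
              _ ≤ (‖T‖ * ‖y‖) * ‖y‖ := mul_le_mul_of_nonneg_right (T.le_opNorm y) (norm_nonneg y)
              _ = ‖T‖ * ‖y‖ ^ 2 := by ring
        have h2c : μ * ((min 1 ‖T‖) + A) ≤ 2 * (1 - μ * β) := by
          have hm1 : μ * min 1 ‖T‖ ≤ μ * ‖T‖ :=
            mul_le_mul_of_nonneg_left (min_le_right _ _) hμ.le
          nlinarith [hcase, hμ1]
        exact DLSR_spectral W T A (min 1 ‖T‖) (1 - μ * β) μ hTmem hTsa
          (fun y hy => (hTbnd y hy).1) hhigh (le_min hA1 hAT) hμ.le h2c hcA0 x hx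
    have hPid : ∀ k : ℤ, (W.orthogonalProjectionOnto (Dlt (k + 1)) : EuclideanSpace ℝ (Fin N))
        = ((1 - μ * β) • (W.orthogonalProjectionOnto (Dlt k) : EuclideanSpace ℝ (Fin N)) - μ • T (W.orthogonalProjectionOnto (Dlt k) : EuclideanSpace ℝ (Fin N)))
          - μ • T (Dlt k - (W.orthogonalProjectionOnto (Dlt k) : EuclideanSpace ℝ (Fin N)))
          + μ • (W.orthogonalProjectionOnto (gv k) : EuclideanSpace ℝ (Fin N)) := by
      intro k
      have hPTD : (W.orthogonalProjectionOnto (T (Dlt k)) : EuclideanSpace ℝ (Fin N)) = T (Dlt k) :=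
        hprself _ (hTmem _)
      have hsplitT : T (Dlt k) = T (W.orthogonalProjectionOnto (Dlt k) : EuclideanSpace ℝ (Fin N)) + T (Dlt k - (W.orthogonalProjectionOnto (Dlt k) : EuclideanSpace ℝ (Fin N))) := by
        rw [← map_add]; congr 1; abel
      rw [hVR2 k, map_add, map_sub, map_smul, map_smul, map_smul]
      push_cast
      rw [hPTD, hsplitT]
      module
    have hLe : ∀ k : ℤ, e (k + 1) ≤ (1 - μ * β - μ * A) * e k + μ * ‖T‖ * ep k + μ * η k := by
      intro k
      rw [he' (k + 1), hPid k]
      have s1 : ‖(1 - μ * β) • (W.orthogonalProjectionOnto (Dlt k) : EuclideanSpace ℝ (Fin N)) - μ • T (W.orthogonalProjectionOnto (Dlt k) : EuclideanSpace ℝ (Fin N))‖ ≤ (1 - μ * β - μ * A) * e k := by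
        rw [he' k]
        exact hspec _ (SetLike.coe_mem _)
      have s2 : ‖μ • T (Dlt k - (W.orthogonalProjectionOnto (Dlt k) : EuclideanSpace ℝ (Fin N)))‖ ≤ μ * ‖T‖ * ep k := by
        rw [norm_smul, Real.norm_eq_abs, abs_of_nonneg hμ.le, hep' k]
        calc μ * ‖T (Dlt k - (W.orthogonalProjectionOnto (Dlt k) : EuclideanSpace ℝ (Fin N)))‖
            ≤ μ * (‖T‖ * ‖Dlt k - (W.orthogonalProjectionOnto (Dlt k) : EuclideanSpace ℝ (Fin N))‖) :=
              mul_le_mul_of_nonneg_left (T.le_opNorm _) hμ.le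
          _ = μ * ‖T‖ * ‖Dlt k - (W.orthogonalProjectionOnto (Dlt k) : EuclideanSpace ℝ (Fin N))‖ := by ring
      have s3 : ‖μ • (W.orthogonalProjectionOnto (gv k) : EuclideanSpace ℝ (Fin N))‖ ≤ μ * η k := by
        rw [norm_smul, Real.norm_eq_abs, abs_of_nonneg hμ.le, hη'' k]
        exact mul_le_mul_of_nonneg_left (hprle _) hμ.le
      calc ‖((1 - μ * β) • (W.orthogonalProjectionOnto (Dlt k) : EuclideanSpace ℝ (Fin N)) - μ • T (W.orthogonalProjectionOnto (Dlt k) : EuclideanSpace ℝ (Fin N)))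
            - μ • T (Dlt k - (W.orthogonalProjectionOnto (Dlt k) : EuclideanSpace ℝ (Fin N)))
            + μ • (W.orthogonalProjectionOnto (gv k) : EuclideanSpace ℝ (Fin N))‖
          ≤ ‖((1 - μ * β) • (W.orthogonalProjectionOnto (Dlt k) : EuclideanSpace ℝ (Fin N)) - μ • T (W.orthogonalProjectionOnto (Dlt k) : EuclideanSpace ℝ (Fin N)))
              - μ • T (Dlt k - (W.orthogonalProjectionOnto (Dlt k) : EuclideanSpace ℝ (Fin N)))‖
            + ‖μ • (W.orthogonalProjectionOnto (gv k) : EuclideanSpace ℝ (Fin N))‖ := norm_add_le _ _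
        _ ≤ ‖(1 - μ * β) • (W.orthogonalProjectionOnto (Dlt k) : EuclideanSpace ℝ (Fin N)) - μ • T (W.orthogonalProjectionOnto (Dlt k) : EuclideanSpace ℝ (Fin N))‖
            + ‖μ • T (Dlt k - (W.orthogonalProjectionOnto (Dlt k) : EuclideanSpace ℝ (Fin N)))‖
            + ‖μ • (W.orthogonalProjectionOnto (gv k) : EuclideanSpace ℝ (Fin N))‖ := by
            linarith [norm_sub_le ((1 - μ * β) • (W.orthogonalProjectionOnto (Dlt k) : EuclideanSpace ℝ (Fin N)) - μ • T (W.orthogonalProjectionOnto (Dlt k) : EuclideanSpace ℝ (Fin N)))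
              (μ • T (Dlt k - (W.orthogonalProjectionOnto (Dlt k) : EuclideanSpace ℝ (Fin N))))]
        _ ≤ (1 - μ * β - μ * A) * e k + μ * ‖T‖ * ep k + μ * η k := by
            linarith [s1, s2, s3]
    have hInv : ∀ j : ℤ, e j ≤ Be ∧ ep j ≤ Bep ∧ η j ≤ Bη := by
      have hstrong : ∀ n : ℕ, ∀ j : ℤ, j ≤ (τbar : ℤ) + n →
          (e j ≤ Be ∧ ep j ≤ Bep ∧ η j ≤ Bη) := by
        intro n
        induction n with
        | zero =>
            intro j hj
            rw [Nat.cast_zero, add_zero] at hj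
            exact hinit j hj
        | succ n ih =>
            intro j hj
            by_cases hj' : j ≤ (τbar : ℤ) + n
            · exact ih j hj'
            · push_neg at hj'
              have hj1 : j - 1 ≤ (τbar : ℤ) + n := by push_cast at hj; omega
              have hηj1 : η (j - 1) ≤ μ * C :=
                hetaC (j - 1) (fun i hi1 hi2 => ih i (by omega))
              obtain ⟨pe, pep, pη⟩ := ih (j - 1) hj1
              have heq : j - 1 + 1 = j := by ring
              have hLe' := hLe (j - 1); rw [heq] at hLe'
              have hLep' := hLep (j - 1); rw [heq] at hLep'
              have hq : μ * (μ * C) ≤ μ * (β * Bep) :=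
                mul_le_mul_of_nonneg_left hμC2.le hμ.le
              have h1 : μ * η (j - 1) ≤ μ * (μ * C) := mul_le_mul_of_nonneg_left hηj1 hμ.le
              refine ⟨?_, ?_, ?_⟩
              · have h2 : (1 - μ * β - μ * A) * e (j - 1) ≤ (1 - μ * β - μ * A) * Be :=
                  mul_le_mul_of_nonneg_left pe hcA0
                have h3 : μ * ‖T‖ * ep (j - 1) ≤ μ * ‖T‖ * Bep :=
                  mul_le_mul_of_nonneg_left pep (mul_nonneg hμ.le hT0)
                nlinarith [hLe', h1, h2, h3, hq, hrel, hμ.le]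
              · have h2 : (1 - μ * β) * ep (j - 1) ≤ (1 - μ * β) * Bep :=
                  mul_le_mul_of_nonneg_left pep hc0
                nlinarith [hLep', h1, h2, hq]
              · have hηj : η j ≤ μ * C :=
                  hetaC j (fun i hi1 hi2 => ih i (by omega))
                linarith [hμC1]
      intro j
      exact hstrong (j - τbar).toNat j (by omega)
    intro k _
    have hηk : η k ≤ μ * C := hetaC k (fun i _ _ => hInv i)
    have hηk' : μ * η k ≤ μ ^ 2 * C := by nlinarith [mul_le_mul_of_nonneg_left hηk hμ.le]
    constructor
    · linarith [hLep k]
    · linarith [hLe k]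
  · -- =================== CASE II ===================
    push_neg at hcase
    have hBeBep : (0:ℝ) < Be + Bep := by linarith
    have hτβ : (τbar : ℝ) * Real.sqrt (S.card : ℝ) < β := by
      have h1 : μ * ((τbar * Real.sqrt (S.card : ℝ)) * ((β + ‖T‖) * (Be + Bep))) ≤ μ * C := by
        apply mul_le_mul_of_nonneg_left _ hμ.le
        rw [hC]
        nlinarith [hτcard.le, hBη.le]
      have h2 : (τbar * Real.sqrt (S.card : ℝ)) * (Be + Bep)
          < μ * ((τbar * Real.sqrt (S.card : ℝ)) * ((β + ‖T‖) * (Be + Bep))) := by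
        nlinarith [mul_lt_mul_of_pos_left hcase (mul_pos hτcard hBeBep)]
      have h4 : β * Bep ≤ β * (Be + Bep) := by nlinarith
      have h5 : (τbar * Real.sqrt (S.card : ℝ)) * (Be + Bep) < β * (Be + Bep) := by
        linarith [hμC2]
      exact lt_of_mul_lt_mul_right h5 hBeBep.le
    set θ : ℝ := (1 - μ * β) + μ * (τbar * Real.sqrt (S.card : ℝ)) with hθdef
    have hθ0 : 0 ≤ θ := by
      have : 0 ≤ μ * (τbar * Real.sqrt (S.card : ℝ)) := by positivity
      rw [hθdef]; linarith
    have hθ1 : θ < 1 := by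
      have := mul_lt_mul_of_pos_left hτβ hμ
      rw [hθdef]; nlinarith [hμ, hβ]
    have hEEb : ∀ (m : ℤ) (B : ℝ), 0 ≤ B →
        (∀ i : ℤ, m - τbar ≤ i → i ≤ m - 1 → ‖Dlt i‖ ≤ B) →
        ‖EE m‖ ≤ (τbar * Real.sqrt (S.card : ℝ)) * B := by
      intro m B hB hDi
      set b2 : Fin N → ℝ :=
        fun u => Real.sqrt (∑ i ∈ Finset.Icc (m - τbar) (m - 1), (Dlt i u) ^ 2) with hb2
      have hab : ∀ u ∈ S, ∀ v, |Dlt (m - τ u v) u| ≤ b2 u := by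
        intro u hu v
        obtain ⟨h1τ, h2τ⟩ := hτ u hu v
        have hmem : m - (τ u v : ℤ) ∈ Finset.Icc (m - (τbar : ℤ)) (m - 1) := by
          rw [Finset.mem_Icc]; omega
        have hsingle : (Dlt (m - τ u v) u) ^ 2
            ≤ ∑ i ∈ Finset.Icc (m - (τbar : ℤ)) (m - 1), (Dlt i u) ^ 2 :=
          Finset.single_le_sum (f := fun i => (Dlt i u) ^ 2) (fun i _ => sq_nonneg _) hmem
        calc |Dlt (m - τ u v) u| = Real.sqrt ((Dlt (m - τ u v) u) ^ 2) :=
              (Real.sqrt_sq_eq_abs _).symm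
          _ ≤ b2 u := Real.sqrt_le_sqrt hsingle
      have hkey : ‖EE m‖ ≤ Real.sqrt (S.card : ℝ) * Real.sqrt (∑ u ∈ S, (b2 u) ^ 2) :=
        DLSR_key1 S (fun u v => Dlt (m - τ u v) u) b2 pδ hab hpδ1
      have hsum : ∑ u ∈ S, (b2 u) ^ 2 ≤ (τbar : ℝ) * B ^ 2 := by
        have h1 : ∀ u : Fin N, (b2 u) ^ 2
            = ∑ i ∈ Finset.Icc (m - (τbar : ℤ)) (m - 1), (Dlt i u) ^ 2 := by
          intro u
          exact Real.sq_sqrt (Finset.sum_nonneg fun i _ => sq_nonneg _)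
        calc ∑ u ∈ S, (b2 u) ^ 2
            = ∑ u ∈ S, ∑ i ∈ Finset.Icc (m - (τbar : ℤ)) (m - 1), (Dlt i u) ^ 2 :=
              Finset.sum_congr rfl (fun u _ => h1 u)
          _ = ∑ i ∈ Finset.Icc (m - (τbar : ℤ)) (m - 1), ∑ u ∈ S, (Dlt i u) ^ 2 :=
              Finset.sum_comm
          _ ≤ ∑ _i ∈ Finset.Icc (m - (τbar : ℤ)) (m - 1), B ^ 2 := by
              refine Finset.sum_le_sum (fun i hi => ?_)
              rw [Finset.mem_Icc] at hi
              have hDi' := hDi i hi.1 hi.2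
              have hs : ∑ u ∈ S, (Dlt i u) ^ 2 ≤ ‖Dlt i‖ ^ 2 := by
                rw [DLSR_normsq]
                exact Finset.sum_le_sum_of_subset_of_nonneg (Finset.subset_univ S)
                  (fun u _ _ => sq_nonneg _)
              nlinarith [norm_nonneg (Dlt i)]
          _ = (τbar : ℝ) * B ^ 2 := by rw [Finset.sum_const, DLSR_card_Icc, nsmul_eq_mul]
      have hsqτ : Real.sqrt ((τbar : ℝ) * B ^ 2) ≤ (τbar : ℝ) * B := by
        rw [Real.sqrt_mul (by positivity), Real.sqrt_sq hB]
        apply mul_le_mul_of_nonneg_right _ hB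
        have h1 : (1 : ℝ) ≤ (τbar : ℝ) := by exact_mod_cast hτpos
        nlinarith [Real.sq_sqrt (show (0:ℝ) ≤ (τbar : ℝ) by positivity),
          sq_nonneg (Real.sqrt (τbar : ℝ) - 1), Real.sqrt_nonneg (τbar : ℝ)]
      calc ‖EE m‖ ≤ Real.sqrt (S.card : ℝ) * Real.sqrt (∑ u ∈ S, (b2 u) ^ 2) := hkey
        _ ≤ Real.sqrt (S.card : ℝ) * ((τbar : ℝ) * B) := by
            apply mul_le_mul_of_nonneg_left _ hsqc0
            exact le_trans (Real.sqrt_le_sqrt hsum) hsqτ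
        _ = (τbar * Real.sqrt (S.card : ℝ)) * B := by ring
    have hback : ∀ n : ℕ, ∀ j : ℤ, j ≤ (τbar : ℤ) → ‖Dlt j‖ ≤ θ ^ n * (Be + Bep) := by
      intro n
      induction n with
      | zero =>
          intro j hj
          obtain ⟨q1, q2, _⟩ := hinit j hj
          have := hDle j
          rw [pow_zero, one_mul]
          linarith
      | succ n ih =>
          intro j hj
          have hrec : Dlt j = (1 - μ * β) • Dlt (j - 1) - μ • EE (j - 1) := by
            have h0 := hVR1 (j - 1)
            rw [show j - 1 + 1 = j from by ring] at h0
            exact h0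
          have hEEj : ‖EE (j - 1)‖
              ≤ (τbar * Real.sqrt (S.card : ℝ)) * (θ ^ n * (Be + Bep)) := by
            apply hEEb (j - 1) _ (by positivity)
            intro i hi1 hi2
            exact ih i (by omega)
          have hDj1 : ‖Dlt (j - 1)‖ ≤ θ ^ n * (Be + Bep) := ih (j - 1) (by omega)
          rw [hrec]
          calc ‖(1 - μ * β) • Dlt (j - 1) - μ • EE (j - 1)‖
              ≤ ‖(1 - μ * β) • Dlt (j - 1)‖ + ‖μ • EE (j - 1)‖ := norm_sub_le _ _
            _ = (1 - μ * β) * ‖Dlt (j - 1)‖ + μ * ‖EE (j - 1)‖ := by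
                simp only [norm_smul, Real.norm_eq_abs, abs_of_nonneg hc0, abs_of_nonneg hμ.le]
            _ ≤ (1 - μ * β) * (θ ^ n * (Be + Bep))
                + μ * ((τbar * Real.sqrt (S.card : ℝ)) * (θ ^ n * (Be + Bep))) :=
                add_le_add (mul_le_mul_of_nonneg_left hDj1 hc0)
                  (mul_le_mul_of_nonneg_left hEEj hμ.le)
            _ = θ ^ (n + 1) * (Be + Bep) := by rw [pow_succ, hθdef]; ring
    have hzero : ∀ j : ℤ, j ≤ (τbar : ℤ) → Dlt j = 0 := by
      intro j hj
      have hn : ∀ n : ℕ, ‖Dlt j‖ ≤ θ ^ n * (Be + Bep) := fun n => hback n j hj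
      have hlim : Filter.Tendsto (fun n : ℕ => θ ^ n * (Be + Bep)) Filter.atTop (nhds 0) := by
        have h0 := (tendsto_pow_atTop_nhds_zero_of_lt_one hθ0 hθ1).mul_const (Be + Bep)
        simpa using h0
      have hle0 : ‖Dlt j‖ ≤ 0 := ge_of_tendsto' hlim hn
      exact norm_le_zero_iff.mp hle0
    have hzero' : ∀ j : ℤ, Dlt j = 0 := by
      have hstrong : ∀ n : ℕ, ∀ j : ℤ, j ≤ (τbar : ℤ) + n → Dlt j = 0 := by
        intro n
        induction n with
        | zero =>
            intro j hj
            rw [Nat.cast_zero, add_zero] at hj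
            exact hzero j hj
        | succ n ih =>
            intro j hj
            by_cases hj' : j ≤ (τbar : ℤ) + n
            · exact ih j hj'
            · have hrec : Dlt j = (1 - μ * β) • Dlt (j - 1) - μ • EE (j - 1) := by
                have h0 := hVR1 (j - 1)
                rw [show j - 1 + 1 = j from by ring] at h0
                exact h0
              have hD1 : Dlt (j - 1) = 0 := ih (j - 1) (by push_cast at hj; omega)
              have hEE0 : EE (j - 1) = 0 := by
                ext v
                show (∑ u ∈ S, Dlt (j - 1 - τ u v) u * pδ u v) = 0
                apply Finset.sum_eq_zero
                intro u hu
                have h1τ := (hτ u hu v).1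
                have hDz : Dlt (j - 1 - τ u v) = 0 := by
                  apply ih
                  push_cast at hj ⊢
                  omega
                rw [hDz]
                simp
              rw [hrec, hD1, hEE0]
              simp
      intro j
      exact hstrong (j - τbar).toNat j (by omega)
    intro k _
    have hfz : ∀ j : ℤ, f j = ftil := by
      intro j
      have h2 : f j - ftil = 0 := hzero' j
      exact sub_eq_zero.mp h2
    have hez : ∀ j : ℤ, e j = 0 := by
      intro j
      rw [he j, hfz j]
      simp
    have hepz : ∀ j : ℤ, ep j = 0 := by
      intro j
      rw [hep j, hfz j, hprself ftil hftilW]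
      simp
    have hμ2C : 0 ≤ μ ^ 2 * C := by positivity
    constructor
    · rw [hepz (k + 1), hepz k]
      linarith
    · rw [hez (k + 1), hez k, hepz k]
      linarith
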